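/- Let X be a real vector space with two norms ‖·‖₁ and ‖·‖₂, and α, β ∈ [0,1) with 0 < α+β < 1. Then ‖·‖₁ and ‖·‖₂ are equivalent if and only if there exists a constant k > 0 such that |ρ_{α,β,1}(u,v) − ρ_{α,β,2}(u,v)| < k · min{‖u‖₁‖v‖₁, ‖u‖₂‖v‖₂} for all nonzero u, v ∈ X, where ρ_{α,β,c} denotes the ρ_{α,β}-functional with respect to ‖·‖_c. -/

import Mathlib

/-- Right norm derivative with respect to an abstract norm function `n`. -/
noncomputable def rhoPF {X : Type*} [AddCommGroup X] [Module ℝ X] (n : X → ℝ) (u v : X) : ℝ :=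
  Filter.limUnder (nhdsWithin (0:ℝ) (Set.Ioi 0)) (fun t : ℝ => ((n (u + t • v))^2 - (n u)^2) / (2*t))

/-- Left norm derivative with respect to an abstract norm function `n`. -/
noncomputable def rhoMF {X : Type*} [AddCommGroup X] [Module ℝ X] (n : X → ℝ) (u v : X) : ℝ :=
  Filter.limUnder (nhdsWithin (0:ℝ) (Set.Iio 0)) (fun t : ℝ => ((n (u + t • v))^2 - (n u)^2) / (2*t))

noncomputable def rhoABF {X : Type*} [AddCommGroup X] [Module ℝ X]
    (n : X → ℝ) (α β : ℝ) (u v : X) : ℝ := α * rhoMF n u v + β * rhoPF n u v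

/-- `n` is a norm on the real vector space `X`. -/
def IsNormFn {X : Type*} [AddCommGroup X] [Module ℝ X] (n : X → ℝ) : Prop :=
  (∀ x, 0 ≤ n x) ∧ (∀ x, n x = 0 ↔ x = 0) ∧
  (∀ (c : ℝ) (x : X), n (c • x) = |c| * n x) ∧ (∀ x y, n (x + y) ≤ n x + n y)

section auxlemmas
open Filter Set Topology
variable {X : Type*} [AddCommGroup X] [Module ℝ X]

variable {n : X → ℝ}

lemma quot_abs_le (h : IsNormFn n) (u v : X) (t : ℝ) :
    |((n (u + t • v))^2 - (n u)^2) / (2*t)| ≤ n u * n v + |t| * (n v)^2 / 2 := by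
  obtain ⟨hpos, hzero, hsmul, htri⟩ := h
  rcases eq_or_ne t 0 with rfl | ht
  · simp
    nlinarith [mul_nonneg (hpos u) (hpos v), sq_nonneg (n v)]
  have h1 : |n (u + t • v) - n u| ≤ |t| * n v := by
    rw [abs_sub_le_iff]
    constructor
    · have := htri u (t • v)
      rw [hsmul] at this
      linarith
    · have := htri (u + t • v) (-(t • v))
      simp only [add_neg_cancel_right] at this
      rw [show -(t • v) = (-t) • v by rw [neg_smul], hsmul, abs_neg] at this
      linarith
  have h2 : n (u + t • v) + n u ≤ 2 * n u + |t| * n v := by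
    have := htri u (t • v)
    rw [hsmul] at this
    linarith
  have h3 : |(n (u + t • v))^2 - (n u)^2| ≤ (|t| * n v) * (2 * n u + |t| * n v) := by
    rw [sq_sub_sq, abs_mul]
    have h4 : |n (u + t • v) + n u| = n (u + t • v) + n u :=
      abs_of_nonneg (by have := hpos (u + t • v); have := hpos u; linarith)
    rw [h4]
    have h9 : (0:ℝ) ≤ 2 * n u + |t| * n v := by
      nlinarith [hpos u, mul_nonneg (abs_nonneg t) (hpos v)]
    exact mul_le_mul h2 h1 (abs_nonneg _) h9 |>.trans_eq (mul_comm _ _)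
  rw [abs_div, abs_mul, abs_two, div_le_iff₀ (by positivity)]
  calc |(n (u + t • v))^2 - (n u)^2| ≤ (|t| * n v) * (2 * n u + |t| * n v) := h3
    _ = (n u * n v + |t| * (n v)^2 / 2) * (2 * |t|) := by ring

lemma convexOn_g (h : IsNormFn n) (u v : X) :
    ConvexOn ℝ Set.univ (fun t : ℝ => (n (u + t • v))^2) := by
  obtain ⟨hpos, hzero, hsmul, htri⟩ := h
  refine ⟨convex_univ, fun a _ b _ la lb hla hlb hlab => ?_⟩
  simp only [smul_eq_mul]
  have key : u + (la * a + lb * b) • v = la • (u + a • v) + lb • (u + b • v) := by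
    have : la • (u + a • v) + lb • (u + b • v) = (la + lb) • u + (la * a + lb * b) • v := by
      simp only [smul_add, add_smul, smul_smul]
      abel
    rw [this, hlab, one_smul]
  have hn : n (u + (la * a + lb * b) • v) ≤ la * n (u + a • v) + lb * n (u + b • v) := by
    rw [key]
    calc n (la • (u + a • v) + lb • (u + b • v))
        ≤ n (la • (u + a • v)) + n (lb • (u + b • v)) := htri _ _
      _ = la * n (u + a • v) + lb * n (u + b • v) := by
          rw [hsmul, hsmul, abs_of_nonneg hla, abs_of_nonneg hlb]
  have h6 := hpos (u + (la * a + lb * b) • v)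
  have h7 := hpos (u + a • v)
  have h8 := hpos (u + b • v)
  nlinarith [sq_nonneg (n (u + a • v) - n (u + b • v)), mul_nonneg hla hlb]

lemma rhoPF_spec (h : IsNormFn n) (u v : X) :
    Tendsto (fun t : ℝ => ((n (u + t • v))^2 - (n u)^2) / (2*t)) (𝓝[>] (0:ℝ))
      (𝓝 (rhoPF n u v)) ∧ |rhoPF n u v| ≤ n u * n v := by
  set g : ℝ → ℝ := fun t => (n (u + t • v))^2 with hg
  set q : ℝ → ℝ := fun t => ((n (u + t • v))^2 - (n u)^2) / (2*t) with hqdef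
  have hg0 : g 0 = (n u)^2 := by simp [hg]
  have hq : ∀ s : ℝ, q s = slope g 0 s / 2 := by
    intro s
    rw [slope_def_field, hg0, sub_zero, div_div, mul_comm]
  have hmono := (convexOn_g h u v).slope_mono (Set.mem_univ (0:ℝ))
  have monoQ : MonotoneOn q (Ioo (0:ℝ) 1) := by
    intro x hx y hy hxy
    rw [hq, hq]
    have := hmono ⟨Set.mem_univ _, by simpa using hx.1.ne'⟩
      ⟨Set.mem_univ _, by simpa using (hx.1.trans_le hxy).ne'⟩ hxy
    linarith
  have bddQ : BddBelow (q '' Ioo (0:ℝ) 1) := by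
    refine ⟨-(n u * n v + (n v)^2 / 2), ?_⟩
    rintro x ⟨s, hs, rfl⟩
    have h1 := quot_abs_le h u v s
    have h2 : |s| ≤ 1 := by rw [abs_of_pos hs.1]; exact hs.2.le
    have h3 := neg_abs_le (q s)
    have h4 : |s| * (n v)^2 ≤ 1 * (n v)^2 := by
      apply mul_le_mul_of_nonneg_right h2 (by positivity)
    have : |q s| ≤ n u * n v + (n v)^2 / 2 := by
      refine h1.trans ?_; linarith
    linarith
  have htend : Tendsto q (𝓝[>] (0:ℝ)) (𝓝 (sInf (q '' Ioo (0:ℝ) 1))) :=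
    MonotoneOn.tendsto_nhdsWithin_Ioo_right ⟨1/2, by norm_num⟩ monoQ bddQ
  have heq : rhoPF n u v = sInf (q '' Ioo (0:ℝ) 1) := htend.limUnder_eq
  rw [heq]
  refine ⟨htend, ?_⟩
  have habs : Tendsto (fun s => |q s|) (𝓝[>] (0:ℝ)) (𝓝 |sInf (q '' Ioo (0:ℝ) 1)|) :=
    htend.abs
  have hG : Tendsto (fun s : ℝ => n u * n v + s * (n v)^2 / 2) (𝓝[>] (0:ℝ))
      (𝓝 (n u * n v)) := by
    have hc : Continuous (fun s : ℝ => n u * n v + s * (n v)^2 / 2) := by continuity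
    simpa using (hc.tendsto 0).mono_left nhdsWithin_le_nhds
  have hle : ∀ᶠ s in 𝓝[>] (0:ℝ), |q s| ≤ n u * n v + s * (n v)^2 / 2 := by
    filter_upwards [self_mem_nhdsWithin] with s hs
    have := quot_abs_le h u v s
    rwa [abs_of_pos (show (0:ℝ) < s from hs)] at this
  exact le_of_tendsto_of_tendsto habs hG hle

lemma rhoMF_spec (h : IsNormFn n) (u v : X) :
    Tendsto (fun t : ℝ => ((n (u + t • v))^2 - (n u)^2) / (2*t)) (𝓝[<] (0:ℝ))
      (𝓝 (rhoMF n u v)) ∧ |rhoMF n u v| ≤ n u * n v := by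
  set g : ℝ → ℝ := fun t => (n (u + t • v))^2 with hg
  set q : ℝ → ℝ := fun t => ((n (u + t • v))^2 - (n u)^2) / (2*t) with hqdef
  have hg0 : g 0 = (n u)^2 := by simp [hg]
  have hq : ∀ s : ℝ, q s = slope g 0 s / 2 := by
    intro s
    rw [slope_def_field, hg0, sub_zero, div_div, mul_comm]
  have hmono := (convexOn_g h u v).slope_mono (Set.mem_univ (0:ℝ))
  have monoQ : MonotoneOn q (Ioo (-1:ℝ) 0) := by
    intro x hx y hy hxy
    rw [hq, hq]
    have := hmono ⟨Set.mem_univ _, by simpa using hx.2.ne⟩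
      ⟨Set.mem_univ _, by simpa using hy.2.ne⟩ hxy
    linarith
  have bddQ : BddAbove (q '' Ioo (-1:ℝ) 0) := by
    refine ⟨n u * n v + (n v)^2 / 2, ?_⟩
    rintro x ⟨s, hs, rfl⟩
    have h1 := quot_abs_le h u v s
    have h2 : |s| ≤ 1 := by rw [abs_of_neg hs.2]; linarith [hs.1]
    have h3 := le_abs_self (q s)
    have h4 : |s| * (n v)^2 ≤ 1 * (n v)^2 :=
      mul_le_mul_of_nonneg_right h2 (by positivity)
    linarith
  have htend : Tendsto q (𝓝[<] (0:ℝ)) (𝓝 (sSup (q '' Ioo (-1:ℝ) 0))) :=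
    MonotoneOn.tendsto_nhdsWithin_Ioo_left ⟨-1/2, by norm_num⟩ monoQ bddQ
  have heq : rhoMF n u v = sSup (q '' Ioo (-1:ℝ) 0) := htend.limUnder_eq
  rw [heq]
  refine ⟨htend, ?_⟩
  have habs : Tendsto (fun s => |q s|) (𝓝[<] (0:ℝ)) (𝓝 |sSup (q '' Ioo (-1:ℝ) 0)|) :=
    htend.abs
  have hG : Tendsto (fun s : ℝ => n u * n v + (-s) * (n v)^2 / 2) (𝓝[<] (0:ℝ))
      (𝓝 (n u * n v)) := by
    have hc : Continuous (fun s : ℝ => n u * n v + (-s) * (n v)^2 / 2) := by continuity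
    simpa using (hc.tendsto 0).mono_left nhdsWithin_le_nhds
  have hle : ∀ᶠ s in 𝓝[<] (0:ℝ), |q s| ≤ n u * n v + (-s) * (n v)^2 / 2 := by
    filter_upwards [self_mem_nhdsWithin] with s hs
    have := quot_abs_le h u v s
    rwa [abs_of_neg (show s < (0:ℝ) from hs)] at this
  exact le_of_tendsto_of_tendsto habs hG hle

lemma rhoPF_self (h : IsNormFn n) (u : X) : rhoPF n u u = (n u)^2 := by
  obtain ⟨hpos, hzero, hsmul, htri⟩ := h
  have hev : ∀ᶠ t in 𝓝[>] (0:ℝ),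
      ((n (u + t • u))^2 - (n u)^2) / (2*t) = (1 + t/2) * (n u)^2 := by
    filter_upwards [self_mem_nhdsWithin] with t ht
    have ht' : (0:ℝ) < t := ht
    have h1 : u + t • u = (1 + t) • u := by rw [add_smul, one_smul]
    rw [h1, hsmul, abs_of_pos (by linarith : (0:ℝ) < 1 + t)]
    field_simp
    ring
  have hlin : Tendsto (fun t : ℝ => (1 + t/2) * (n u)^2) (𝓝[>] (0:ℝ)) (𝓝 ((n u)^2)) := by
    have hc : Continuous (fun t : ℝ => (1 + t/2) * (n u)^2) := by continuity
    simpa using (hc.tendsto 0).mono_left nhdsWithin_le_nhds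
  exact (hlin.congr' (hev.mono fun t h => h.symm)).limUnder_eq

lemma rhoMF_self (h : IsNormFn n) (u : X) : rhoMF n u u = (n u)^2 := by
  obtain ⟨hpos, hzero, hsmul, htri⟩ := h
  have hev : ∀ᶠ t in 𝓝[<] (0:ℝ),
      ((n (u + t • u))^2 - (n u)^2) / (2*t) = (1 + t/2) * (n u)^2 := by
    filter_upwards [Ioo_mem_nhdsLT (by norm_num : (-1:ℝ) < 0)] with t ht
    have ht0 : t ≠ 0 := ht.2.ne
    have h1 : u + t • u = (1 + t) • u := by rw [add_smul, one_smul]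
    rw [h1, hsmul, abs_of_pos (by linarith [ht.1] : (0:ℝ) < 1 + t)]
    field_simp
    ring
  have hlin : Tendsto (fun t : ℝ => (1 + t/2) * (n u)^2) (𝓝[<] (0:ℝ)) (𝓝 ((n u)^2)) := by
    have hc : Continuous (fun t : ℝ => (1 + t/2) * (n u)^2) := by continuity
    simpa using (hc.tendsto 0).mono_left nhdsWithin_le_nhds
  exact (hlin.congr' (hev.mono fun t h => h.symm)).limUnder_eq

lemma rhoABF_self (h : IsNormFn n) (α β : ℝ) (u : X) :
    rhoABF n α β u u = (α + β) * (n u)^2 := by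
  rw [rhoABF, rhoPF_self h, rhoMF_self h]; ring

lemma abs_rhoABF_le (h : IsNormFn n) {α β : ℝ} (hα : 0 ≤ α) (hβ : 0 ≤ β)
    (hab1 : α + β ≤ 1) (u v : X) : |rhoABF n α β u v| ≤ n u * n v := by
  have h1 := (rhoMF_spec h u v).2
  have h2 := (rhoPF_spec h u v).2
  have hP : 0 ≤ n u * n v := mul_nonneg (h.1 u) (h.1 v)
  rw [rhoABF]
  have h3 := abs_add_le (α * rhoMF n u v) (β * rhoPF n u v)
  rw [abs_mul, abs_mul, abs_of_nonneg hα, abs_of_nonneg hβ] at h3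
  nlinarith [mul_le_mul_of_nonneg_left h1 hα, mul_le_mul_of_nonneg_left h2 hβ,
    mul_nonneg (by linarith : (0:ℝ) ≤ 1 - (α + β)) hP]

end auxlemmas

open Filter Set Topology in
theorem stmt_10 {X : Type*} [AddCommGroup X] [Module ℝ X]
    (n₁ n₂ : X → ℝ) (h₁ : IsNormFn n₁) (h₂ : IsNormFn n₂)
    (α β : ℝ) (hα : α ∈ Set.Ico (0:ℝ) 1) (hβ : β ∈ Set.Ico (0:ℝ) 1)
    (hab : 0 < α + β) (hab1 : α + β < 1) :
    (∃ m M : ℝ, 0 < m ∧ 0 < M ∧ ∀ u : X, m * n₁ u ≤ n₂ u ∧ n₂ u ≤ M * n₁ u) ↔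
    (∃ k : ℝ, 0 < k ∧ ∀ u v : X, u ≠ 0 → v ≠ 0 →
      |rhoABF n₁ α β u v - rhoABF n₂ α β u v| < k * min (n₁ u * n₁ v) (n₂ u * n₂ v)) := by
  constructor
  · rintro ⟨m, M, hm, hM, hmm⟩
    refine ⟨(1 + M^2 + (1/m)^2) + 1, by positivity, fun u v hu hv => ?_⟩
    have hn1u : 0 < n₁ u := lt_of_le_of_ne (h₁.1 u) (fun e => hu ((h₁.2.1 u).1 e.symm))
    have hn1v : 0 < n₁ v := lt_of_le_of_ne (h₁.1 v) (fun e => hv ((h₁.2.1 v).1 e.symm))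
    have hn2u : 0 < n₂ u := lt_of_le_of_ne (h₂.1 u) (fun e => hu ((h₂.2.1 u).1 e.symm))
    have hn2v : 0 < n₂ v := lt_of_le_of_ne (h₂.1 v) (fun e => hv ((h₂.2.1 v).1 e.symm))
    have hP1 : 0 < n₁ u * n₁ v := mul_pos hn1u hn1v
    have hP2 : 0 < n₂ u * n₂ v := mul_pos hn2u hn2v
    have b1 : n₂ u * n₂ v ≤ M^2 * (n₁ u * n₁ v) := by
      have := mul_le_mul (hmm u).2 (hmm v).2 (h₂.1 v)
        (by positivity : (0:ℝ) ≤ M * n₁ u)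
      nlinarith
    have hu1 : n₁ u ≤ (1/m) * n₂ u := by
      rw [div_mul_eq_mul_div, le_div_iff₀ hm]
      linarith [(hmm u).1, mul_comm m (n₁ u)] 
    have hv1 : n₁ v ≤ (1/m) * n₂ v := by
      rw [div_mul_eq_mul_div, le_div_iff₀ hm]
      linarith [(hmm v).1, mul_comm m (n₁ v)]
    have b2 : n₁ u * n₁ v ≤ (1/m)^2 * (n₂ u * n₂ v) := by
      have := mul_le_mul hu1 hv1 (h₁.1 v) (by positivity : (0:ℝ) ≤ (1/m) * n₂ u)
      nlinarith
    set D : ℝ := 1 + M^2 + (1/m)^2 with hD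
    have hmin : n₁ u * n₁ v + n₂ u * n₂ v ≤ D * min (n₁ u * n₁ v) (n₂ u * n₂ v) := by
      rcases le_total (n₁ u * n₁ v) (n₂ u * n₂ v) with hc | hc
      · rw [min_eq_left hc, hD]
        nlinarith [b1, mul_nonneg (sq_nonneg (1/m)) hP1.le]
      · rw [min_eq_right hc, hD]
        nlinarith [b2, mul_nonneg (sq_nonneg M) hP2.le]
    have hminpos : 0 < min (n₁ u * n₁ v) (n₂ u * n₂ v) := lt_min hP1 hP2
    have hρ1 := abs_rhoABF_le h₁ hα.1 hβ.1 hab1.le u v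
    have hρ2 := abs_rhoABF_le h₂ hα.1 hβ.1 hab1.le u v
    have habs := abs_sub (rhoABF n₁ α β u v) (rhoABF n₂ α β u v)
    calc |rhoABF n₁ α β u v - rhoABF n₂ α β u v|
        ≤ |rhoABF n₁ α β u v| + |rhoABF n₂ α β u v| := habs
      _ ≤ n₁ u * n₁ v + n₂ u * n₂ v := add_le_add hρ1 hρ2
      _ ≤ D * min (n₁ u * n₁ v) (n₂ u * n₂ v) := hmin
      _ < (D + 1) * min (n₁ u * n₁ v) (n₂ u * n₂ v) := by nlinarith
  · rintro ⟨k, hk, hkey⟩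
    set c : ℝ := k / (α + β) with hc
    have hcpos : 0 < c := div_pos hk hab
    have hck : c * (α + β) = k := div_mul_cancel₀ k hab.ne'
    set K : ℝ := Real.sqrt (1 + c) with hKdef
    have hK2 : K^2 = 1 + c := Real.sq_sqrt (by positivity)
    have hK1 : 1 ≤ K := by nlinarith [Real.sqrt_nonneg (1 + c)]
    have hKpos : (0:ℝ) < K := by linarith
    refine ⟨1/K, K, by positivity, hKpos, fun u => ?_⟩
    rcases eq_or_ne u 0 with rfl | hu
    · have e1 : n₁ (0:X) = 0 := (h₁.2.1 0).2 rfl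
      have e2 : n₂ (0:X) = 0 := (h₂.2.1 0).2 rfl
      simp [e1, e2]
    · have hn1u : 0 < n₁ u := lt_of_le_of_ne (h₁.1 u) (fun e => hu ((h₁.2.1 u).1 e.symm))
      have hn2u : 0 < n₂ u := lt_of_le_of_ne (h₂.1 u) (fun e => hu ((h₂.2.1 u).1 e.symm))
      have key := hkey u u hu hu
      rw [rhoABF_self h₁ α β u, rhoABF_self h₂ α β u] at key
      have hm1 : min (n₁ u * n₁ u) (n₂ u * n₂ u) ≤ n₁ u * n₁ u := min_le_left _ _
      have hm2 : min (n₁ u * n₁ u) (n₂ u * n₂ u) ≤ n₂ u * n₂ u := min_le_right _ _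
      have hlt := abs_lt.1 key
      have sq1 : (n₂ u)^2 ≤ (1 + c) * (n₁ u)^2 := by
        have h5 : (α + β) * (n₂ u)^2 ≤ (α + β) * (n₁ u)^2 + k * (n₁ u)^2 := by
          nlinarith [hlt.1, mul_le_mul_of_nonneg_left hm1 hk.le]
        rw [← hck] at h5
        nlinarith
      have sq2 : (n₁ u)^2 ≤ (1 + c) * (n₂ u)^2 := by
        have h5 : (α + β) * (n₁ u)^2 ≤ (α + β) * (n₂ u)^2 + k * (n₂ u)^2 := by
          nlinarith [hlt.2, mul_le_mul_of_nonneg_left hm2 hk.le]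
        rw [← hck] at h5
        nlinarith
      have le1 : n₂ u ≤ K * n₁ u := by
        have h6 : (n₂ u)^2 ≤ (K * n₁ u)^2 := by rw [mul_pow, hK2]; exact sq1
        have h7 := Real.sqrt_le_sqrt h6
        rwa [Real.sqrt_sq hn2u.le, Real.sqrt_sq (by positivity)] at h7
      have le2 : n₁ u ≤ K * n₂ u := by
        have h6 : (n₁ u)^2 ≤ (K * n₂ u)^2 := by rw [mul_pow, hK2]; exact sq2
        have h7 := Real.sqrt_le_sqrt h6
        rwa [Real.sqrt_sq hn1u.le, Real.sqrt_sq (by positivity)] at h7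
      constructor
      · rw [div_mul_eq_mul_div, div_le_iff₀ hKpos]
        linarith [mul_comm K (n₂ u)]
      · exact le1
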